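/- Let m ≥ 1, sizes d : Fin m → ℕ with d i ≥ 1, and ranks r : Fin (m+1) → ℕ with r 0 = 1. Suppose the TT cores T̃ i : Fin (d i) → Matrix (Fin (r i)) (Fin (r (i+1))) ℝ and positive weights D i : Fin (d i) → ℝ (D i x > 0) satisfy the new left-orthogonality condition: for every i, ∑_{x ∈ Fin (d i)} (D i x) • ((T̃ i x)ᵀ * (T̃ i x)) = 1 (the identity matrix of size r (i+1)). Then for every k with 1 ≤ k ≤ m, the k-th left part is columnwise orthogonal under the inner product weighted by the product of the weights: ∑ over tuples x ∈ (∀ j : Fin k, Fin (d j)) of (∏_{j < k} D j (x j)) • ((T̃ 0 (x 0) * ⋯ * T̃ (k-1) (x (k-1)))ᵀ * (T̃ 0 (x 0) * ⋯ * T̃ (k-1) (x (k-1)))) = 1 (the identity matrix of size r k). -/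

import Mathlib

open Matrix

/-- Heterogeneous chain product of matrices `M 0 * M 1 * ⋯ * M (m-1)`. -/
noncomputable def chainProd {R : Type} [Semiring R] :
    {m : ℕ} → (ι : Fin (m + 1) → Type) → (∀ i, Fintype (ι i)) → (∀ i, DecidableEq (ι i)) →
    ((i : Fin m) → Matrix (ι i.castSucc) (ι i.succ) R) →
    Matrix (ι 0) (ι (Fin.last m)) R
  | 0, ι, _, de, _ => letI := de 0; (1 : Matrix (ι 0) (ι 0) R)
  | _ + 1, ι, ft, de, M =>
      letI := ft (Fin.succ 0)
      M 0 * chainProd (fun i => ι i.succ) (fun i => ft i.succ) (fun i => de i.succ)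
        (fun i => M i.succ)

/-- Chain product of TT cores with rank profile `r`. -/
noncomputable def ttChain {R : Type} [Semiring R] {m : ℕ} (r : Fin (m + 1) → ℕ)
    (M : (i : Fin m) → Matrix (Fin (r i.castSucc)) (Fin (r i.succ)) R) :
    Matrix (Fin (r 0)) (Fin (r (Fin.last m))) R :=
  chainProd (fun i => Fin (r i)) (fun _ => inferInstance) (fun _ => inferInstance) M

theorem ttChain_succ_eq {m : ℕ} (r : Fin (m + 2) → ℕ)
    (M : (i : Fin (m + 1)) → Matrix (Fin (r i.castSucc)) (Fin (r i.succ)) ℝ) :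
    ttChain r M = M 0 * ttChain (fun i => r i.succ) (fun i => M i.succ) := rfl

theorem ttChain_aux : ∀ (m : ℕ) (d : Fin m → ℕ) (r : Fin (m + 1) → ℕ)
    (T : (i : Fin m) → Fin (d i) → Matrix (Fin (r i.castSucc)) (Fin (r i.succ)) ℝ)
    (D : (i : Fin m) → Fin (d i) → ℝ),
    (∀ i, (∑ x : Fin (d i), D i x • ((T i x)ᵀ * T i x)) = 1) →
    (∑ x : (∀ j, Fin (d j)), (∏ j, D j (x j)) •
       ((ttChain r (fun j => T j (x j)))ᵀ * ttChain r (fun j => T j (x j)))) = 1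
  | 0, d, r, T, D, h => by
      simp [ttChain, chainProd]
  | m + 1, d, r, T, D, h => by
      have key := ttChain_aux m (fun j => d j.succ) (fun i => r i.succ)
        (fun j => T j.succ) (fun j => D j.succ) (fun j => h j.succ)
      rw [← Equiv.sum_comp (Fin.consEquiv (fun j => Fin (d j)))]
      rw [Fintype.sum_prod_type, Finset.sum_comm]
      have main : ∀ y : (∀ j : Fin m, Fin (d j.succ)),
          (∑ x0 : Fin (d 0),
            (∏ j, D j ((Fin.consEquiv (fun j => Fin (d j))) (x0, y) j)) •
              ((ttChain r (fun j => T j ((Fin.consEquiv (fun j => Fin (d j))) (x0, y) j)))ᵀ *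
                ttChain r (fun j => T j ((Fin.consEquiv (fun j => Fin (d j))) (x0, y) j))) :
            Matrix _ _ ℝ) =
          (∏ j, D j.succ (y j)) •
            ((ttChain (fun i => r i.succ) (fun j => T j.succ (y j)))ᵀ *
              ttChain (fun i => r i.succ) (fun j => T j.succ (y j))) := by
        intro y
        set P := ttChain (fun i => r i.succ) (fun j => T j.succ (y j)) with hP
        set p := ∏ j : Fin m, D j.succ (y j) with hp
        have hchain : ∀ x0 : Fin (d 0),
            ttChain r (fun j => T j ((Fin.consEquiv (fun j => Fin (d j))) (x0, y) j)) =
            T 0 x0 * P := by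
          intro x0
          rw [ttChain_succ_eq]
          have h1 : T 0 ((Fin.consEquiv (fun j => Fin (d j))) (x0, y) 0) = T 0 x0 := by
            simp [Fin.consEquiv]
            rfl
          have h2 : (fun i : Fin m =>
              T i.succ ((Fin.consEquiv (fun j => Fin (d j))) (x0, y) i.succ)) =
              fun i => T i.succ (y i) := by
            funext i; simp [Fin.consEquiv]
          rw [hP]
          exact congrArg₂ (· * ·) h1 (congrArg _ h2)
        have hprod : ∀ x0 : Fin (d 0),
            (∏ j, D j ((Fin.consEquiv (fun j => Fin (d j))) (x0, y) j)) = D 0 x0 * p := by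
          intro x0
          rw [Fin.prod_univ_succ]
          simp [hp, Fin.consEquiv]
        calc (∑ x0 : Fin (d 0),
              (∏ j, D j ((Fin.consEquiv (fun j => Fin (d j))) (x0, y) j)) •
                ((ttChain r (fun j => T j ((Fin.consEquiv (fun j => Fin (d j))) (x0, y) j)))ᵀ *
                  ttChain r (fun j => T j ((Fin.consEquiv (fun j => Fin (d j))) (x0, y) j))) :
              Matrix _ _ ℝ)
            = ∑ x0 : Fin (d 0), p • (Pᵀ * (D 0 x0 • ((T 0 x0)ᵀ * T 0 x0)) * P) := by
              refine Finset.sum_congr rfl fun x0 _ => ?_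
              rw [hprod x0, hchain x0]
              erw [transpose_mul]
              rw [Matrix.mul_smul, Matrix.smul_mul,
                smul_smul, mul_comm p (D 0 x0), Matrix.mul_assoc, Matrix.mul_assoc]
              erw [Matrix.mul_assoc]
              rfl
          _ = p • (Pᵀ * (∑ x0 : Fin (d 0), D 0 x0 • ((T 0 x0)ᵀ * T 0 x0)) * P) := by
              rw [Matrix.mul_sum, Matrix.sum_mul, Finset.smul_sum]
          _ = p • (Pᵀ * P) := by rw [h 0]; erw [Matrix.mul_one]
      rw [Finset.sum_congr rfl fun y _ => main y]
      exact key

/-- **Lemma 3.2.**  If the cores `T̃ i` are new-left-orthogonal with respect to the positive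
weights `D i` (i.e. `∑ x, D i x • (T̃ i x)ᵀ * (T̃ i x) = 1`), then for every `1 ≤ k ≤ m` the
`k`-th left part is columnwise orthogonal under the inner product weighted by the product of
the weights. -/
theorem left_part_weighted_orthogonal
    {m : ℕ} (hm : 1 ≤ m) (d : Fin m → ℕ) (hd : ∀ i, 1 ≤ d i)
    (r : Fin (m + 1) → ℕ) (h0 : r 0 = 1)
    (T : (i : Fin m) → Fin (d i) → Matrix (Fin (r i.castSucc)) (Fin (r i.succ)) ℝ)
    (D : (i : Fin m) → Fin (d i) → ℝ) (hD : ∀ i x, 0 < D i x)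
    (horth : ∀ i : Fin m, (∑ x : Fin (d i), D i x • ((T i x)ᵀ * (T i x))) = 1) :
    ∀ (k : ℕ) (hk1 : 1 ≤ k) (hk : k ≤ m),
      (∑ x : ((j : Fin k) → Fin (d (Fin.castLE hk j))),
        (∏ j : Fin k, D (Fin.castLE hk j) (x j)) •
          ((ttChain (fun j : Fin (k + 1) => r (Fin.castLE (Nat.succ_le_succ hk) j))
              (fun j : Fin k => T (Fin.castLE hk j) (x j)))ᵀ *
            (ttChain (fun j : Fin (k + 1) => r (Fin.castLE (Nat.succ_le_succ hk) j))
              (fun j : Fin k => T (Fin.castLE hk j) (x j))))) = 1 := by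
  intro k hk1 hk
  exact ttChain_aux k (fun j => d (Fin.castLE hk j))
    (fun j => r (Fin.castLE (Nat.succ_le_succ hk) j))
    (fun j => T (Fin.castLE hk j)) (fun j => D (Fin.castLE hk j))
    (fun j => horth (Fin.castLE hk j))
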